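/- arXiv:2409.10669 — 4 statements merged into one kernel-verified Lean document; each statement's English description precedes it below -/
import Mathlib

section
/- Let H be an n×n real symmetric positive semidefinite matrix with eigenvalues λ₁ ≥ λ₂ ≥ … ≥ λₙ (counted with multiplicity, in nonincreasing order), and let k be a natural number with k < n. Then for every n×k real matrix P with orthonormal columns (PᵀP = I_k), there exists a unit vector z ∈ ℝⁿ such that the residual quadratic form satisfies zᵀ(I − PPᵀ)H(I − PPᵀ)z ≥ λ_{k+1}. Equivalently, the supremum over unit vectors z of zᵀ(I − PPᵀ)ᵀH(I − PPᵀ)z is at least λ_{k+1}. -/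
open Matrix

/-- **Lower bound half of the residual quadratic form claim.**
`H` is an `n × n` real symmetric positive semidefinite matrix with eigendecomposition
`H = U * diagonal lam * Uᵀ` (`U` orthogonal), eigenvalues `lam` nonincreasing (with
multiplicity).  For every `n × k` matrix `P` with orthonormal columns (`Pᵀ * P = 1`)
there is a unit vector `z` (`z ⬝ᵥ z = 1`, i.e. Euclidean norm one) with
`zᵀ (I - P Pᵀ) H (I - P Pᵀ) z ≥ lam ⟨k, hk⟩` (the `(k+1)`-st eigenvalue, 0-indexed). -/
theorem residual_quadratic_form_lower_bound
    (n k : ℕ) (hk : k < n)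
    (H : Matrix (Fin n) (Fin n) ℝ) (hH : H.PosSemidef)
    (lam : Fin n → ℝ) (U : Matrix (Fin n) (Fin n) ℝ)
    (hU : Uᵀ * U = 1) (hdecomp : H = U * Matrix.diagonal lam * Uᵀ)
    (hlam : Antitone lam)
    (P : Matrix (Fin n) (Fin k) ℝ) (hP : Pᵀ * P = 1) :
    ∃ z : Fin n → ℝ, z ⬝ᵥ z = 1 ∧
      lam ⟨k, hk⟩ ≤
        z ⬝ᵥ (((1 - P * Pᵀ) * H * (1 - P * Pᵀ)).mulVec z) := by
  have hk1 : k + 1 ≤ n := hk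
  set f : Fin (k+1) → Fin n := Fin.castLE hk1 with hf
  set U' : Matrix (Fin n) (Fin (k+1)) ℝ := U.submatrix id f with hU'
  set M : Matrix (Fin k) (Fin (k+1)) ℝ := Pᵀ * U' with hM
  -- kernel of M nontrivial
  have hninj : ¬ Function.Injective M.mulVecLin := by
    intro hinj
    have := LinearMap.finrank_le_finrank_of_injective hinj
    simp [Module.finrank_pi] at this
  obtain ⟨x, y, hxy, hne⟩ := Function.not_injective_iff.mp hninj
  set c : Fin (k+1) → ℝ := x - y with hc
  have hcne : c ≠ 0 := sub_ne_zero.mpr hne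
  have hMc : M.mulVec c = 0 := by
    have : M.mulVecLin (x - y) = 0 := by rw [map_sub, hxy]; simp
    simpa using this
  have hcc : 0 < c ⬝ᵥ c := by
    rcases lt_or_eq_of_le (Finset.sum_nonneg fun i _ => mul_self_nonneg (c i)) with h | h
    · exact h
    · exact absurd ((dotProduct_self_eq_zero).mp h.symm) hcne
  set a : ℝ := Real.sqrt (c ⬝ᵥ c) with ha
  have ha0 : 0 < a := Real.sqrt_pos.mpr hcc
  set c' : Fin (k+1) → ℝ := a⁻¹ • c with hc'
  have hcc' : c' ⬝ᵥ c' = 1 := by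
    rw [hc', smul_dotProduct, dotProduct_smul, smul_eq_mul, smul_eq_mul,
      ← mul_assoc, ← mul_inv]
    rw [ha, ← Real.sqrt_mul_self hcc.le]
    field_simp
    rw [Real.sq_sqrt (by positivity)]
  set z : Fin n → ℝ := U'.mulVec c' with hz
  have h1 : U'ᵀ * U' = (1 : Matrix (Fin (k+1)) (Fin (k+1)) ℝ) := by
    ext i j
    have h := congrFun (congrFun hU (f i)) (f j)
    simp only [Matrix.mul_apply, Matrix.transpose_apply, Matrix.one_apply] at h ⊢
    simp only [hU', Matrix.submatrix_apply, id_eq]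
    rw [h]
    simp [hf, Fin.castLE_inj]
  have hUU : U * Uᵀ = 1 := mul_eq_one_comm.mp hU
  have hzz : z ⬝ᵥ z = 1 := by
    rw [hz, dotProduct_mulVec, ← mulVec_transpose, mulVec_mulVec, h1, one_mulVec, hcc']
  have hPz : Pᵀ.mulVec z = 0 := by
    rw [hz, mulVec_mulVec, ← hM, hc', mulVec_smul, hMc, smul_zero]
  have hAz : (1 - P * Pᵀ).mulVec z = z := by
    rw [sub_mulVec, one_mulVec, ← mulVec_mulVec, hPz, mulVec_zero, sub_zero]
  refine ⟨z, hzz, ?_⟩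
  have hAsymm : (1 - P * Pᵀ)ᵀ = 1 - P * Pᵀ := by
    rw [transpose_sub, transpose_one, transpose_mul, transpose_transpose]
  -- reduce quadratic form to z ⬝ᵥ H z
  have hred : z ⬝ᵥ (((1 - P * Pᵀ) * H * (1 - P * Pᵀ)).mulVec z) = z ⬝ᵥ H.mulVec z := by
    rw [← mulVec_mulVec, ← mulVec_mulVec, hAz, dotProduct_mulVec, ← mulVec_transpose,
      hAsymm, hAz]
  rw [hred]
  set w : Fin n → ℝ := Uᵀ.mulVec z with hw
  have hwj : ∀ j : Fin n, k < (j : ℕ) → w j = 0 := by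
    intro j hj
    have hw2 : w = (Uᵀ * U').mulVec c' := by rw [hw, hz, mulVec_mulVec]
    rw [hw2]
    simp only [mulVec, dotProduct]
    apply Finset.sum_eq_zero
    intro i _
    have hij : (Uᵀ * U') j i = (1 : Matrix (Fin n) (Fin n) ℝ) j (f i) := by
      have h := congrFun (congrFun hU j) (f i)
      simp only [Matrix.mul_apply, Matrix.transpose_apply] at h ⊢
      simpa [hU'] using h
    have hne' : j ≠ f i := by
      intro hcon
      have : (j : ℕ) = (i : ℕ) := by rw [hcon]; simp [hf]
      have := i.isLt
      omega
    rw [hij, Matrix.one_apply_ne hne', zero_mul]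
  have hww : w ⬝ᵥ w = 1 := by
    rw [hw, dotProduct_mulVec, ← mulVec_transpose, transpose_transpose, mulVec_mulVec,
      hUU, one_mulVec, hzz]
  have hquad : z ⬝ᵥ H.mulVec z = ∑ j, lam j * (w j * w j) := by
    rw [hdecomp, ← mulVec_mulVec, ← mulVec_mulVec, dotProduct_mulVec, ← mulVec_transpose]
    rw [show (Uᵀ).mulVec z = w from rfl]
    simp [dotProduct, mulVec_diagonal]
    ring_nf
    apply Finset.sum_congr rfl
    intro j _
    ring
  rw [hquad]
  calc lam ⟨k, hk⟩ = ∑ j, lam ⟨k, hk⟩ * (w j * w j) := by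
        rw [← Finset.mul_sum]
        have hd : ∑ j, w j * w j = w ⬝ᵥ w := rfl
        rw [hd, hww, mul_one]
    _ ≤ ∑ j, lam j * (w j * w j) := by
        apply Finset.sum_le_sum
        intro j _
        by_cases hj : (j : ℕ) ≤ k
        · exact mul_le_mul_of_nonneg_right (hlam (by simp [Fin.le_def, hj])) (mul_self_nonneg _)
        · rw [hwj j (by omega)]; simp
end

section
/- Let H be an n×n real symmetric positive semidefinite matrix with eigenvalues λ₁ ≥ λ₂ ≥ … ≥ λₙ (counted with multiplicity, in nonincreasing order), and let k be a natural number with k < n. If P is an n×k real matrix whose columns are pairwise orthonormal eigenvectors of H corresponding to the k largest eigenvalues λ₁, …, λ_k, then for every vector z ∈ ℝⁿ with ‖z‖ ≤ 1, the residual quadratic form satisfies zᵀ(I − PPᵀ)H(I − PPᵀ)z ≤ λ_{k+1}. -/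
open Matrix

/-- **Attainment half of the residual quadratic form claim.**
`H` is an `n × n` real symmetric positive semidefinite matrix with eigendecomposition
`H = U * diagonal lam * Uᵀ` (`U` orthogonal), eigenvalues `lam` nonincreasing (with
multiplicity).  If the columns of `P` are pairwise orthonormal (`Pᵀ * P = 1`)
eigenvectors of `H` for the `k` largest eigenvalues, then for every vector `z` with
Euclidean norm at most one (`z ⬝ᵥ z ≤ 1`) the residual quadratic form satisfies
`zᵀ (I - P Pᵀ) H (I - P Pᵀ) z ≤ lam ⟨k, hk⟩` (the `(k+1)`-st eigenvalue, 0-indexed). -/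
theorem residual_quadratic_form_upper_bound
    (n k : ℕ) (hk : k < n)
    (H : Matrix (Fin n) (Fin n) ℝ) (hH : H.PosSemidef)
    (lam : Fin n → ℝ) (U : Matrix (Fin n) (Fin n) ℝ)
    (hU : Uᵀ * U = 1) (hdecomp : H = U * Matrix.diagonal lam * Uᵀ)
    (hlam : Antitone lam)
    (P : Matrix (Fin n) (Fin k) ℝ) (hP : Pᵀ * P = 1)
    (hPeig : ∀ j : Fin k, H.mulVec (fun i => P i j)
        = lam (Fin.castLE hk.le j) • (fun i => P i j)) :
    ∀ z : Fin n → ℝ, z ⬝ᵥ z ≤ 1 →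
      z ⬝ᵥ (((1 - P * Pᵀ) * H * (1 - P * Pᵀ)).mulVec z) ≤ lam ⟨k, hk⟩ := by
  intro z hz
  have hUU : U * Uᵀ = 1 := mul_eq_one_comm.mp hU
  set A : Matrix (Fin n) (Fin n) ℝ := 1 - P * Pᵀ with hA
  have hQQ : P * Pᵀ * (P * Pᵀ) = P * Pᵀ := by
    rw [Matrix.mul_assoc, ← Matrix.mul_assoc Pᵀ P Pᵀ, hP, Matrix.one_mul]
  have hAsym : Aᵀ = A := by
    simp [hA, transpose_sub, transpose_mul]
  have hA2 : A * A = A := by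
    simp only [hA, sub_mul, mul_sub, one_mul, mul_one, hQQ]
    abel
  set w : Fin n → ℝ := A *ᵥ z with hw
  -- the goal is about w ⬝ᵥ H *ᵥ w
  have hgoal : z ⬝ᵥ ((A * H * A) *ᵥ z) = w ⬝ᵥ H *ᵥ w := by
    rw [hw, ← mulVec_mulVec, ← mulVec_mulVec, dotProduct_mulVec z A,
      ← mulVec_transpose, hAsym, mulVec_mulVec]
  rw [hgoal]
  -- Pᵀ annihilates w
  have hPA : Pᵀ * A = 0 := by
    rw [hA, Matrix.mul_sub, Matrix.mul_one, ← Matrix.mul_assoc, hP,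
      Matrix.one_mul, sub_self]
  have hPw : Pᵀ *ᵥ w = 0 := by
    rw [hw, mulVec_mulVec, hPA, zero_mulVec]
  -- norm bound for w
  have hPPz : 0 ≤ z ⬝ᵥ (P * Pᵀ) *ᵥ z := by
    rw [← mulVec_mulVec, dotProduct_mulVec, ← mulVec_transpose]
    exact Finset.sum_nonneg fun i _ => mul_self_nonneg _
  have hww : w ⬝ᵥ w ≤ 1 := by
    have : w ⬝ᵥ w = z ⬝ᵥ A *ᵥ z := by
      rw [hw, dotProduct_mulVec, ← mulVec_transpose, hAsym, mulVec_mulVec, hA2]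
      exact dotProduct_comm _ _
    rw [this, hA, sub_mulVec, dotProduct_sub, one_mulVec]
    linarith
  set c : Fin n → ℝ := Uᵀ *ᵥ w with hc
  have hcc : c ⬝ᵥ c ≤ 1 := by
    have : c ⬝ᵥ c = w ⬝ᵥ w := by
      rw [hc, dotProduct_mulVec, ← mulVec_transpose, transpose_transpose,
        mulVec_mulVec, hUU, one_mulVec]
    rw [this]; exact hww
  have hwHw : w ⬝ᵥ H *ᵥ w = ∑ i, lam i * (c i * c i) := by
    rw [hdecomp, ← mulVec_mulVec, ← mulVec_mulVec, dotProduct_mulVec w U,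
      ← mulVec_transpose, ← hc]
    simp only [dotProduct, mulVec_diagonal]
    exact Finset.sum_congr rfl fun i _ => by ring
  rw [hwHw]
  set b : Matrix (Fin n) (Fin k) ℝ := Uᵀ * P with hb
  have hbb : bᵀ * b = 1 := by
    rw [hb, transpose_mul, transpose_transpose, Matrix.mul_assoc,
      ← Matrix.mul_assoc U, hUU, Matrix.one_mul, hP]
  have hbc : bᵀ *ᵥ c = 0 := by
    rw [hb, hc, transpose_mul, transpose_transpose, mulVec_mulVec,
      Matrix.mul_assoc, hUU, Matrix.mul_one, hPw]
  -- eigen-support of the columns of b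
  have hsupp : ∀ (i : Fin n) (j : Fin k),
      lam i ≠ lam (Fin.castLE hk.le j) → b i j = 0 := by
    intro i j hne
    have h3 : Uᵀ *ᵥ (fun i => P i j) = fun i => b i j := by
      funext i; simp [hb, Matrix.mul_apply, mulVec, dotProduct]
    have h1 : (Matrix.diagonal lam) *ᵥ (fun i => b i j)
        = lam (Fin.castLE hk.le j) • (fun i => b i j) := by
      have h2 := congrArg (fun v => Uᵀ *ᵥ v) (hPeig j)
      simp only [mulVec_smul] at h2
      rw [mulVec_mulVec, hdecomp, ← Matrix.mul_assoc, ← Matrix.mul_assoc, hU,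
        Matrix.one_mul, ← mulVec_mulVec, h3] at h2
      rw [h2]
    have h4 := congrFun h1 i
    simp only [mulVec_diagonal, Pi.smul_apply, smul_eq_mul] at h4
    by_contra hbij
    exact hne (mul_right_cancel₀ hbij h4)
  -- lam ⟨k, hk⟩ is nonnegative
  have hlamnn : ∀ i, 0 ≤ lam i := by
    have hD : Matrix.diagonal lam = Uᵀ * H * U := by
      rw [hdecomp, ← Matrix.mul_assoc, ← Matrix.mul_assoc, hU, Matrix.one_mul,
        Matrix.mul_assoc, hU, Matrix.mul_one]
    have : (Matrix.diagonal lam).PosSemidef := by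
      rw [hD]
      have := hH.conjTranspose_mul_mul_same U
      rwa [conjTranspose_eq_transpose_of_trivial] at this
    exact posSemidef_diagonal_iff.mp this
  -- the subtype of indices with eigenvalue strictly above lam ⟨k, hk⟩
  set T := {i : Fin n // lam ⟨k, hk⟩ < lam i} with hT
  have hTk : ∀ i : T, (i.1 : ℕ) < k := by
    intro i
    by_contra hik
    have : (⟨k, hk⟩ : Fin n) ≤ i.1 := by
      exact Fin.mk_le_of_le_val (not_lt.mp hik)
    exact absurd (hlam this) (not_le.mpr i.2)
  have hfc : ∀ i : T, (Fin.castLE hk.le ⟨(i.1 : ℕ), hTk i⟩) = i.1 := by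
    intro i; ext; rfl
  set B : Matrix T T ℝ := fun i j => b i.1 ⟨(j.1 : ℕ), hTk j⟩ with hB
  -- b columns in T are supported on T
  have hbT : ∀ (i : Fin n) (j : T), i ∉ {i : Fin n | lam ⟨k, hk⟩ < lam i} →
      b i ⟨(j.1 : ℕ), hTk j⟩ = 0 := by
    intro i j hi
    apply hsupp
    rw [hfc]
    have h1 : lam i ≤ lam ⟨k, hk⟩ := not_lt.mp hi
    exact ne_of_lt (lt_of_le_of_lt h1 j.2)
  have hsum : ∀ g : Fin n → ℝ, (∀ i, ¬ lam ⟨k, hk⟩ < lam i → g i = 0) →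
      ∑ i : T, g i.1 = ∑ i : Fin n, g i := by
    intro g hg
    rw [← Finset.sum_subtype (Finset.univ.filter fun i => lam ⟨k, hk⟩ < lam i)
      (by simp) g]
    exact Finset.sum_filter_of_ne fun i _ hne => by
      by_contra h; exact hne (hg i h)
  have hB1 : Bᵀ * B = 1 := by
    ext j j'
    have h1 : (Bᵀ * B) j j' = ∑ i : T,
        b i.1 ⟨(j.1 : ℕ), hTk j⟩ * b i.1 ⟨(j'.1 : ℕ), hTk j'⟩ := by
      simp [Matrix.mul_apply, hB]
      rfl
    have h2 : ∑ i : T, b i.1 ⟨(j.1 : ℕ), hTk j⟩ * b i.1 ⟨(j'.1 : ℕ), hTk j'⟩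
        = (1 : Matrix (Fin k) (Fin k) ℝ) ⟨(j.1 : ℕ), hTk j⟩ ⟨(j'.1 : ℕ), hTk j'⟩ := by
      calc ∑ i : T, b i.1 ⟨(j.1 : ℕ), hTk j⟩ * b i.1 ⟨(j'.1 : ℕ), hTk j'⟩
          = ∑ i : Fin n, b i ⟨(j.1 : ℕ), hTk j⟩ * b i ⟨(j'.1 : ℕ), hTk j'⟩ :=
            hsum (fun i => b i ⟨(j.1 : ℕ), hTk j⟩ * b i ⟨(j'.1 : ℕ), hTk j'⟩)
              (fun i hi => by
                show b i ⟨(j.1 : ℕ), hTk j⟩ * b i ⟨(j'.1 : ℕ), hTk j'⟩ = 0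
                rw [hbT i j hi, zero_mul])
        _ = (bᵀ * b) ⟨(j.1 : ℕ), hTk j⟩ ⟨(j'.1 : ℕ), hTk j'⟩ := by
            simp [Matrix.mul_apply]
        _ = _ := by rw [hbb]
    rw [h1, h2]
    by_cases hjj : j = j'
    · subst hjj; simp [Matrix.one_apply]
    · have : (⟨(j.1 : ℕ), hTk j⟩ : Fin k) ≠ ⟨(j'.1 : ℕ), hTk j'⟩ := by
        intro h
        apply hjj
        apply Subtype.ext
        rw [Fin.mk.injEq] at h
        exact Fin.ext h
      simp [Matrix.one_apply, this, hjj]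
  have hB2 : B * Bᵀ = 1 := mul_eq_one_comm.mp hB1
  -- c vanishes on T
  have hcT : ∀ i : Fin n, lam ⟨k, hk⟩ < lam i → c i = 0 := by
    have h0 : Bᵀ *ᵥ (fun i : T => c i.1) = 0 := by
      funext j
      have h1 : (Bᵀ *ᵥ fun i : T => c i.1) j
          = ∑ i : T, b i.1 ⟨(j.1 : ℕ), hTk j⟩ * c i.1 := by
        simp [mulVec, dotProduct, hB]
        rfl
      have h2 : ∑ i : T, b i.1 ⟨(j.1 : ℕ), hTk j⟩ * c i.1 = 0 := by
        calc ∑ i : T, b i.1 ⟨(j.1 : ℕ), hTk j⟩ * c i.1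
            = ∑ i : Fin n, b i ⟨(j.1 : ℕ), hTk j⟩ * c i :=
              hsum (fun i => b i ⟨(j.1 : ℕ), hTk j⟩ * c i)
                (fun i hi => by
                  show b i ⟨(j.1 : ℕ), hTk j⟩ * c i = 0
                  rw [hbT i j hi, zero_mul])
          _ = (bᵀ *ᵥ c) ⟨(j.1 : ℕ), hTk j⟩ := by simp [mulVec, dotProduct]
          _ = 0 := by rw [hbc]; rfl
      rw [h1, h2]; rfl
    intro i hi
    have h3 : (fun i : T => c i.1) = 0 := by
      have := congrArg (fun M => M *ᵥ (fun i : T => c i.1)) hB2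
      simp only [one_mulVec] at this
      rw [← this, ← mulVec_mulVec, h0, mulVec_zero]
    exact congrFun h3 ⟨i, hi⟩
  -- final estimate
  have hstep : ∑ i, lam i * (c i * c i) ≤ ∑ i, lam ⟨k, hk⟩ * (c i * c i) := by
    apply Finset.sum_le_sum
    intro i _
    by_cases hi : lam ⟨k, hk⟩ < lam i
    · rw [hcT i hi]; simp
    · exact mul_le_mul_of_nonneg_right (not_lt.mp hi) (mul_self_nonneg _)
  have hfin : ∑ i, lam ⟨k, hk⟩ * (c i * c i) = lam ⟨k, hk⟩ * (c ⬝ᵥ c) := by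
    rw [dotProduct, Finset.mul_sum]
  calc ∑ i, lam i * (c i * c i) ≤ lam ⟨k, hk⟩ * (c ⬝ᵥ c) := by rw [← hfin]; exact hstep
    _ ≤ lam ⟨k, hk⟩ * 1 := mul_le_mul_of_nonneg_left hcc (hlamnn _)
    _ = lam ⟨k, hk⟩ := mul_one _
end

section
/- Let ℓ be a twice continuously differentiable real-valued function on the space of m×n real matrices, let W be an m×n real matrix with Dℓ(W) = 0, and define g(A, B) = ℓ(W + B·A) on the product space of k×n matrices and m×k matrices. Then for every k×n matrix A₀, the second Fréchet derivative of g at the point (A₀, 0), evaluated at directions (h₁, u₁) and (h₂, u₂) (with hᵢ k×n matrices and uᵢ m×k matrices), equals D²ℓ(W) evaluated at the pair of directions (u₁·A₀, u₂·A₀). -/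
open Matrix

/- Equip matrix spaces with a norm (all norms on these finite-dimensional spaces are
equivalent, so differentiability and Fréchet derivatives do not depend on this choice). -/
attribute [local instance] Matrix.normedAddCommGroup Matrix.normedSpace

/-- Matrix multiplication `(A, B) ↦ B * A` is a bounded bilinear map. -/
theorem lora_isBoundedBilinearMap_mul (m n k : ℕ) :
    IsBoundedBilinearMap ℝ
      (fun p : Matrix (Fin k) (Fin n) ℝ × Matrix (Fin m) (Fin k) ℝ => p.2 * p.1) := by
  refine ⟨fun x₁ x₂ y => by simp [Matrix.mul_add], fun c x y => by simp [Matrix.mul_smul],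
    fun x y₁ y₂ => by simp [Matrix.add_mul], fun c x y => by simp [Matrix.smul_mul],
    ⟨(k : ℝ) + 1, by positivity, fun A B => ?_⟩⟩
  have h1 : (0:ℝ) ≤ ((k:ℝ) + 1) * ‖A‖ * ‖B‖ := by positivity
  rw [Matrix.norm_le_iff h1]
  intro i j
  calc ‖(B * A) i j‖ = ‖∑ t, B i t * A t j‖ := by rw [Matrix.mul_apply]
    _ ≤ ∑ t, ‖B i t * A t j‖ := norm_sum_le _ _
    _ ≤ ∑ _t : Fin k, ‖B‖ * ‖A‖ := by
        refine Finset.sum_le_sum fun t _ => ?_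
        rw [norm_mul]
        exact mul_le_mul (Matrix.norm_entry_le_entrywise_sup_norm B)
          (Matrix.norm_entry_le_entrywise_sup_norm A) (norm_nonneg _) (norm_nonneg _)
    _ = (k : ℝ) * ‖B‖ * ‖A‖ := by simp [mul_assoc]
    _ ≤ ((k:ℝ) + 1) * ‖A‖ * ‖B‖ := by
        rw [mul_right_comm]
        gcongr
        linarith

/-- **The Hessian of the LoRA-reparametrized loss at initialization (B–B block).**
If `ℓ` is `C²` and `Dℓ(W) = 0`, then for every `A₀`, the second Fréchet derivative of
`g (A, B) = ℓ (W + B * A)` at `(A₀, 0)`, evaluated at directions `(h₁, u₁)` and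
`(h₂, u₂)`, equals `D²ℓ(W)` evaluated at `(u₁ * A₀, u₂ * A₀)`. -/
theorem lora_hessian_at_init
    (m n k : ℕ) (ℓ : Matrix (Fin m) (Fin n) ℝ → ℝ)
    (hC2 : ContDiff ℝ 2 ℓ)
    (W : Matrix (Fin m) (Fin n) ℝ) (hgrad : fderiv ℝ ℓ W = 0) :
    ∀ (A₀ h₁ h₂ : Matrix (Fin k) (Fin n) ℝ) (u₁ u₂ : Matrix (Fin m) (Fin k) ℝ),
      fderiv ℝ
        (fderiv ℝ
          (fun p : Matrix (Fin k) (Fin n) ℝ × Matrix (Fin m) (Fin k) ℝ =>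
            ℓ (W + p.2 * p.1)))
        (A₀, (0 : Matrix (Fin m) (Fin k) ℝ)) (h₁, u₁) (h₂, u₂)
      = fderiv ℝ (fderiv ℝ ℓ) W (u₁ * A₀) (u₂ * A₀) := by
  intro A₀ h₁ h₂ u₁ u₂
  letI : NormedAddCommGroup (Matrix (Fin m) (Fin n) ℝ →L[ℝ] ℝ) := ContinuousLinearMap.toNormedAddCommGroup
  letI : NormedSpace ℝ (Matrix (Fin m) (Fin n) ℝ →L[ℝ] ℝ) := ContinuousLinearMap.toNormedSpace
  set E := Matrix (Fin k) (Fin n) ℝ × Matrix (Fin m) (Fin k) ℝ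
  have b := lora_isBoundedBilinearMap_mul m n k
  set φ : E → Matrix (Fin m) (Fin n) ℝ := fun p => W + p.2 * p.1 with hφ
  have hφd : ∀ p : E, HasFDerivAt φ (b.deriv p) p := fun p => (b.hasFDerivAt p).const_add W
  have hℓdiff : Differentiable ℝ ℓ := hC2.differentiable (by norm_num)
  -- the first derivative of g everywhere
  have hgd : ∀ p : E, HasFDerivAt (fun p : E => ℓ (W + p.2 * p.1))
      ((fderiv ℝ ℓ (φ p)).comp (b.deriv p)) p := fun p =>
    ((hℓdiff (φ p)).hasFDerivAt).comp p (hφd p)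
  have hgd' : (fderiv ℝ (fun p : E => ℓ (W + p.2 * p.1)))
      = fun p => (fderiv ℝ ℓ (φ p)).comp (b.deriv p) := funext fun p => (hgd p).fderiv
  set p₀ : E := (A₀, (0 : Matrix (Fin m) (Fin k) ℝ)) with hp₀
  have hφp₀ : φ p₀ = W := by simp [hφ, hp₀]
  -- derivative of p ↦ fderiv ℝ ℓ (φ p) at p₀
  have hDℓ : ContDiff ℝ 1 (fderiv ℝ ℓ) := hC2.fderiv_right (by norm_num)
  have hc : HasFDerivAt (fun p : E => fderiv ℝ ℓ (φ p))
      ((fderiv ℝ (fderiv ℝ ℓ) W).comp (b.deriv p₀)) p₀ := by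
    have h1 : HasFDerivAt (fderiv ℝ ℓ) (fderiv ℝ (fderiv ℝ ℓ) W) (φ p₀) := by
      rw [hφp₀]; exact (hDℓ.differentiable one_ne_zero W).hasFDerivAt
    exact h1.comp p₀ (hφd p₀)
  -- derivative of p ↦ b.deriv p at p₀
  have hd : HasFDerivAt (fun p : E => b.deriv p)
      (b.isBoundedLinearMap_deriv.toContinuousLinearMap) p₀ :=
    b.isBoundedLinearMap_deriv.hasFDerivAt
  have hG := hc.clm_comp hd
  rw [hgd']
  erw [hG.fderiv]
  change fderiv ℝ ℓ (φ p₀) (b.deriv (h₁, u₁) (h₂, u₂)) + fderiv ℝ (fderiv ℝ ℓ) W (b.deriv p₀ (h₁, u₁)) (b.deriv p₀ (h₂, u₂)) = _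
  have hc0 : fderiv ℝ ℓ (φ p₀) = 0 := by rw [hφp₀, hgrad]
  simp only [ContinuousLinearMap.add_apply, ContinuousLinearMap.comp_apply,
    ContinuousLinearMap.flip_apply, ContinuousLinearMap.compL_apply, hc0,
    IsBoundedLinearMap.toContinuousLinearMap, IsBoundedBilinearMap.deriv_apply,
    ContinuousLinearMap.zero_comp, ContinuousLinearMap.zero_apply, zero_add]
  simp [hp₀, Matrix.zero_mul]
end

section
/- Let ℓ be a twice continuously differentiable real-valued function on the space of m×n real matrices, let W be an m×n real matrix with Dℓ(W) = 0, and define g(A, B) = ℓ(W + B·A) on the product space of k×n matrices and m×k matrices. Then for every k×n matrix A₀, the A–A block of the Hessian of g at (A₀, 0) vanishes: the second Fréchet derivative of g at (A₀, 0) evaluated at any pair of directions of the form (h₁, 0) and (h₂, 0), with h₁, h₂ k×n matrices, equals zero; likewise the mixed blocks vanish: it equals zero at any pair of directions (h₁, 0) and (0, u₂). -/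
open Matrix

/- Equip matrix spaces with a norm (all norms on these finite-dimensional spaces are
equivalent, so differentiability and Fréchet derivatives do not depend on this choice). -/
attribute [local instance] Matrix.normedAddCommGroup Matrix.normedSpace

open ContinuousLinearMap in
noncomputable def mulCLM (m n k : ℕ) :
    Matrix (Fin k) (Fin n) ℝ →L[ℝ] Matrix (Fin m) (Fin k) ℝ →L[ℝ] Matrix (Fin m) (Fin n) ℝ :=
  LinearMap.toContinuousLinearMap
    { toFun := fun A => LinearMap.toContinuousLinearMap
        { toFun := fun B => B * A
          map_add' := fun B B' => Matrix.add_mul B B' A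
          map_smul' := fun r B => Matrix.smul_mul r B A }
      map_add' := fun A A' => by ext B : 1; exact Matrix.mul_add B A A'
      map_smul' := fun r A => by ext B : 1; exact Matrix.mul_smul B r A }

/-- **Vanishing A–A and mixed Hessian blocks of the LoRA-reparametrized loss.**
If `ℓ` is `C²` and `Dℓ(W) = 0`, then for every `A₀`, the second Fréchet derivative of
`g (A, B) = ℓ (W + B * A)` at the LoRA initialization `(A₀, 0)` vanishes on any pair of
directions `(h₁, 0), (h₂, 0)` (the A–A block) and on any pair `(h₁, 0), (0, u₂)`
(the mixed block). -/
theorem lora_hessian_AA_and_mixed_blocks_vanish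
    (m n k : ℕ) (ℓ : Matrix (Fin m) (Fin n) ℝ → ℝ)
    (hC2 : ContDiff ℝ 2 ℓ)
    (W : Matrix (Fin m) (Fin n) ℝ) (hgrad : fderiv ℝ ℓ W = 0) :
    ∀ (A₀ h₁ h₂ : Matrix (Fin k) (Fin n) ℝ) (u₂ : Matrix (Fin m) (Fin k) ℝ),
      fderiv ℝ
        (fderiv ℝ
          (fun p : Matrix (Fin k) (Fin n) ℝ × Matrix (Fin m) (Fin k) ℝ =>
            ℓ (W + p.2 * p.1)))
        (A₀, (0 : Matrix (Fin m) (Fin k) ℝ))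
        (h₁, (0 : Matrix (Fin m) (Fin k) ℝ)) (h₂, (0 : Matrix (Fin m) (Fin k) ℝ)) = 0 ∧
      fderiv ℝ
        (fderiv ℝ
          (fun p : Matrix (Fin k) (Fin n) ℝ × Matrix (Fin m) (Fin k) ℝ =>
            ℓ (W + p.2 * p.1)))
        (A₀, (0 : Matrix (Fin m) (Fin k) ℝ))
        (h₁, (0 : Matrix (Fin m) (Fin k) ℝ)) ((0 : Matrix (Fin k) (Fin n) ℝ), u₂) = 0 := by
  intro A₀ h₁ h₂ u₂
  set E := Matrix (Fin k) (Fin n) ℝ × Matrix (Fin m) (Fin k) ℝ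
  set g : E → ℝ := fun p => ℓ (W + p.2 * p.1) with hg_def
  have hB : IsBoundedBilinearMap ℝ (fun p : E => p.2 * p.1) :=
    (mulCLM m n k).isBoundedBilinearMap
  -- g is C²
  have hφ : ContDiff ℝ 2 (fun p : E => W + p.2 * p.1) :=
    contDiff_const.add (hB.contDiff)
  have hg : ContDiff ℝ 2 g := hC2.comp hφ
  -- fderiv g vanishes at every point (A, 0)
  have key : ∀ A : Matrix (Fin k) (Fin n) ℝ, fderiv ℝ g (A, 0) = 0 := by
    intro A
    have hφ' : HasFDerivAt (fun p : E => W + p.2 * p.1)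
        (hB.deriv (A, 0)) (A, 0) := (hB.hasFDerivAt (A, 0)).const_add W
    have hWA : W + (0 : Matrix (Fin m) (Fin k) ℝ) * A = W := by
      rw [Matrix.zero_mul, add_zero]
    have hℓ' : HasFDerivAt ℓ (fderiv ℝ ℓ W) (W + (0 : Matrix (Fin m) (Fin k) ℝ) * A) := by
      rw [hWA]
      exact (hC2.differentiable (by norm_num) W).hasFDerivAt
    have := hℓ'.comp (A, (0 : Matrix (Fin m) (Fin k) ℝ)) hφ'
    have h0 : (fderiv ℝ ℓ W).comp (hB.deriv (A, 0)) = 0 := by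
      rw [hgrad]
      exact ContinuousLinearMap.zero_comp _
    exact this.fderiv.trans h0
  -- the first derivative of (fderiv g) exists at (A₀, 0)
  have hdd : DifferentiableAt ℝ (fderiv ℝ g) (A₀, (0 : Matrix (Fin m) (Fin k) ℝ)) :=
    ((hg.fderiv_right (m := 1) (by norm_num)).differentiable (by norm_num)).differentiableAt
  -- for any direction w, the second derivative in direction ((h₁,0), w) is 0
  have main : ∀ w : E,
      fderiv ℝ (fderiv ℝ g) (A₀, (0 : Matrix (Fin m) (Fin k) ℝ))
        (h₁, (0 : Matrix (Fin m) (Fin k) ℝ)) w = 0 := by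
    intro w
    set D := fderiv ℝ (fderiv ℝ g) (A₀, (0 : Matrix (Fin m) (Fin k) ℝ)) with hD
    have hFw : HasFDerivAt (fun y : E => fderiv ℝ g y w)
        ((ContinuousLinearMap.apply ℝ ℝ w).comp D)
        (A₀, (0 : Matrix (Fin m) (Fin k) ℝ)) :=
      (ContinuousLinearMap.apply ℝ ℝ w).hasFDerivAt.comp _ hdd.hasFDerivAt
    -- curve along the A-direction
    set c : ℝ → E := fun t => (A₀ + t • h₁, (0 : Matrix (Fin m) (Fin k) ℝ)) with hc
    have hc0 : c 0 = (A₀, (0 : Matrix (Fin m) (Fin k) ℝ)) := by simp [hc]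
    have hcd : HasDerivAt c (h₁, (0 : Matrix (Fin m) (Fin k) ℝ)) 0 := by
      have h1 : HasDerivAt (fun t : ℝ => A₀ + t • h₁) h₁ 0 := by
        have := ((hasDerivAt_id (0 : ℝ)).smul_const h₁).const_add A₀
        rwa [one_smul] at this
      exact h1.prodMk (hasDerivAt_const 0 _)
    have hcomp : HasDerivAt (fun t => fderiv ℝ g (c t) w)
        (((ContinuousLinearMap.apply ℝ ℝ w).comp D) (h₁, (0 : Matrix (Fin m) (Fin k) ℝ))) 0 := by
      rw [← hc0] at hFw
      exact hFw.comp_hasDerivAt 0 hcd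
    have hzero : (fun t => fderiv ℝ g (c t) w) = fun _ => (0 : ℝ) := by
      funext t
      simp [hc, key (A₀ + t • h₁)]
    rw [hzero] at hcomp
    have := hcomp.unique (hasDerivAt_const 0 0)
    exact this
  exact ⟨main _, main _⟩
end
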